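/- The formal power series solution g = X + X²/2 + X³/2 + ⋯ of the formal equation corresponding to g' = exp(g∘g) with g(0)=0 has all coefficients nonnegative. -/

import Mathlib

open PowerSeries

/-- Composition `f ∘ g` of formal power series (intended for `g` with zero constant term):
the `n`-th coefficient only depends on the first `n + 1` terms of `f`. -/
noncomputable def PowerSeries.compose (f g : PowerSeries ℝ) : PowerSeries ℝ :=
  PowerSeries.mk fun n =>
    PowerSeries.coeff n (∑ k ∈ Finset.range (n + 1), PowerSeries.C (PowerSeries.coeff k f) * g ^ k)

lemma coeff_compose (f g : PowerSeries ℝ) (n : ℕ) :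
    PowerSeries.coeff n (PowerSeries.compose f g)
      = ∑ k ∈ Finset.range (n + 1), PowerSeries.coeff k f * PowerSeries.coeff n (g ^ k) := by
  simp [PowerSeries.compose, PowerSeries.coeff_mk, PowerSeries.coeff_C_mul]

lemma mul_coeff_nonneg {f g : PowerSeries ℝ}
    (hf : ∀ i, 0 ≤ PowerSeries.coeff i f) (hg : ∀ i, 0 ≤ PowerSeries.coeff i g) :
    ∀ i, 0 ≤ PowerSeries.coeff i (f * g) := by
  intro i
  rw [PowerSeries.coeff_mul]
  exact Finset.sum_nonneg fun p _ => mul_nonneg (hf _) (hg _)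

lemma pow_coeff_nonneg {f : PowerSeries ℝ}
    (hf : ∀ i, 0 ≤ PowerSeries.coeff i f) (k : ℕ) :
    ∀ i, 0 ≤ PowerSeries.coeff i (f ^ k) := by
  induction k with
  | zero => intro i; simp [PowerSeries.coeff_one]; positivity
  | succ k ih =>
      rw [pow_succ]
      exact mul_coeff_nonneg ih hf

lemma mul_coeff_agree {f f' g g' : PowerSeries ℝ} {n : ℕ}
    (hf : ∀ j ≤ n, PowerSeries.coeff j f = PowerSeries.coeff j f')
    (hg : ∀ j ≤ n, PowerSeries.coeff j g = PowerSeries.coeff j g') :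
    ∀ j ≤ n, PowerSeries.coeff j (f * g) = PowerSeries.coeff j (f' * g') := by
  intro j hj
  rw [PowerSeries.coeff_mul, PowerSeries.coeff_mul]
  apply Finset.sum_congr rfl
  intro p hp
  rw [Finset.HasAntidiagonal.mem_antidiagonal] at hp
  have h1 : p.1 ≤ n := le_trans (by omega) hj
  have h2 : p.2 ≤ n := le_trans (by omega) hj
  rw [hf _ h1, hg _ h2]

lemma pow_coeff_agree {f f' : PowerSeries ℝ} {n : ℕ}
    (hf : ∀ j ≤ n, PowerSeries.coeff j f = PowerSeries.coeff j f') (k : ℕ) :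
    ∀ j ≤ n, PowerSeries.coeff j (f ^ k) = PowerSeries.coeff j (f' ^ k) := by
  induction k with
  | zero => intro j hj; simp
  | succ k ih =>
      intro j hj
      rw [pow_succ, pow_succ]
      exact mul_coeff_agree ih hf j hj

/-- The formal power series solution `g = X + X²/2 + X³/2 + ⋯` of the formal equation
`g' = exp (g ∘ g)`, `g(0) = 0`, has all coefficients nonnegative. -/
theorem stmt_7 (g : PowerSeries ℝ)
    (h0 : PowerSeries.constantCoeff g = 0)
    (h1 : PowerSeries.coeff 1 g = 1)
    (hode : g.derivativeFun
      = PowerSeries.compose (PowerSeries.exp ℝ) (PowerSeries.compose g g)) :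
    ∀ n, 0 ≤ PowerSeries.coeff n g := by
  intro n
  induction n using Nat.strong_induction_on with
  | _ n IH =>
    match n with
    | 0 => simp [PowerSeries.coeff_zero_eq_constantCoeff, h0]
    | (m + 1) =>
      -- truncation of g
      set gT : PowerSeries ℝ :=
        PowerSeries.mk (fun j => if j ≤ m then PowerSeries.coeff j g else 0) with hgT
      have hgT_nonneg : ∀ i, 0 ≤ PowerSeries.coeff i gT := by
        intro i
        rw [hgT, PowerSeries.coeff_mk]
        split
        · exact IH i (by omega)
        · exact le_refl 0
      have hagree : ∀ j ≤ m, PowerSeries.coeff j g = PowerSeries.coeff j gT := by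
        intro j hj
        rw [hgT, PowerSeries.coeff_mk, if_pos hj]
      -- g ∘ g agrees with gT ∘ gT up to degree m
      have hcomp_agree : ∀ j ≤ m,
          PowerSeries.coeff j (PowerSeries.compose g g)
            = PowerSeries.coeff j (PowerSeries.compose gT gT) := by
        intro j hj
        rw [coeff_compose, coeff_compose]
        apply Finset.sum_congr rfl
        intro k hk
        rw [Finset.mem_range] at hk
        rw [hagree k (by omega), pow_coeff_agree hagree k j hj]
      have hcompT_nonneg : ∀ i, 0 ≤ PowerSeries.coeff i (PowerSeries.compose gT gT) := by
        intro i
        rw [coeff_compose]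
        exact Finset.sum_nonneg fun k _ =>
          mul_nonneg (hgT_nonneg k) (pow_coeff_nonneg hgT_nonneg k i)
      -- use the ODE
      have hder : PowerSeries.coeff (m + 1) g * (m + 1)
          = PowerSeries.coeff m
            (PowerSeries.compose (PowerSeries.exp ℝ) (PowerSeries.compose g g)) := by
        rw [← hode]; exact (PowerSeries.coeff_derivative g m).symm
      have hrhs : 0 ≤ PowerSeries.coeff m
          (PowerSeries.compose (PowerSeries.exp ℝ) (PowerSeries.compose g g)) := by
        rw [coeff_compose]
        apply Finset.sum_nonneg
        intro k _
        apply mul_nonneg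
        · rw [PowerSeries.coeff_exp]
          have : algebraMap ℚ ℝ (1 / (Nat.factorial k : ℚ)) = ((1 / (Nat.factorial k : ℚ) : ℚ) : ℝ) := rfl
          rw [this]
          positivity
        · rw [pow_coeff_agree hcomp_agree k m (le_refl m)]
          exact pow_coeff_nonneg hcompT_nonneg k m
      have hpos : (0:ℝ) < (m : ℝ) + 1 := by positivity
      nlinarith [hder, hrhs]
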